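/- Let τ ∈ C_b(ℝ), let A_τ be the Segal algebra corresponding to τ with norm ‖·‖_τ, let w be a continuous positive function on ℝ such that w and w⁻¹ = 1/w are bounded, and let α be an aperiodic homeomorphism of ℝ with τ∘α = τ, so that T̃_{α,w}(f) = w·(f∘α) is an invertible bounded linear operator on A_τ. Then the following are equivalent: (1) T̃_{α,w} is topologically Cesàro hyper-transitive on A_τ; (2) for each ε ∈ (0,1) and every compact subset K of |τ|⁻¹([0,ε]) there exists a strictly increasing sequence (n_k) of natural numbers such that lim_{k→∞} ( sup_{t∈K} n_k⁻¹·∏_{j=0}^{n_k−1} w(α^{j−n_k}(t)) ) = 0 = lim_{k→∞} ( sup_{t∈K} n_k·∏_{j=0}^{n_k−1} (w(α^j(t)))⁻¹ ). -/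

import Mathlib

open Filter Finset

/-- A bounded linear operator `T` on a complex normed space is *topologically Cesàro
hyper-transitive* if for every pair of nonempty open subsets `O₁, O₂` there exists a
strictly increasing sequence `(n_k)` of (positive) natural numbers such that
`n_k⁻¹ • T^{n_k}(O₁) ∩ O₂ ≠ ∅` for all `k`. -/
def IsCesaroHyperTransitive {E : Type*} [NormedAddCommGroup E] [NormedSpace ℂ E]
    (T : E →L[ℂ] E) : Prop :=
  ∀ O₁ O₂ : Set E, IsOpen O₁ → IsOpen O₂ → O₁.Nonempty → O₂.Nonempty →
    ∃ n : ℕ → ℕ, StrictMono n ∧ (∀ k, 1 ≤ n k) ∧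
      ∀ k, ∃ f ∈ O₁, ((n k : ℂ))⁻¹ • (T ^ n k) f ∈ O₂

private lemma iterCancelAux (α : ℝ ≃ₜ ℝ) :
    ∀ (m n : ℕ), m ≤ n → ∀ t : ℝ, (⇑α)^[m] ((⇑α.symm)^[n] t) = (⇑α.symm)^[n - m] t := by
  intro m
  induction m with
  | zero => simp
  | succ m ih =>
    intro n hmn t
    obtain ⟨k, rfl⟩ : ∃ k, n = k + 1 := ⟨n - 1, by omega⟩
    rw [Function.iterate_succ_apply]
    have h1 : α ((⇑α.symm)^[k + 1] t) = (⇑α.symm)^[k] t := by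
      rw [Function.iterate_succ_apply']; exact α.apply_symm_apply _
    rw [h1, ih k (by omega) t]
    congr 1; omega

private lemma iterCancelAux' (α : ℝ ≃ₜ ℝ) (m n : ℕ) (h : m ≤ n) (t : ℝ) :
    (⇑α.symm)^[m] ((⇑α)^[n] t) = (⇑α)^[n - m] t := by
  simpa using iterCancelAux α.symm m n h t

section NormAux

variable {𝓐 : Type*} [NormedAddCommGroup 𝓐] [NormedSpace ℂ 𝓐]
variable (τ : ℝ → ℂ) (ι : 𝓐 →ₗ[ℂ] (ℝ → ℂ))
variable (α : ℝ ≃ₜ ℝ) (w : ℝ → ℝ)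
variable (T S : 𝓐 →L[ℂ] 𝓐)

private lemma tauIterAux (hτα : ∀ t, τ (α t) = τ t) :
    ∀ (n : ℕ) (t : ℝ), τ ((⇑α)^[n] t) = τ t := by
  intro n
  induction n with
  | zero => simp
  | succ n ih => intro t; rw [Function.iterate_succ_apply' α n t, hτα, ih]

private lemma tauIterSymmAux (hτα : ∀ t, τ (α t) = τ t) :
    ∀ (n : ℕ) (t : ℝ), τ ((⇑α.symm)^[n] t) = τ t := by
  have hbase : ∀ t, τ (α.symm t) = τ t := by
    intro t
    have := hτα (α.symm t)
    rw [α.apply_symm_apply] at this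
    exact this.symm
  intro n
  induction n with
  | zero => simp
  | succ n ih => intro t; rw [Function.iterate_succ_apply' (⇑α.symm) n t, hbase, ih]

end NormAux

section SegalAux

variable {𝓐 : Type*} [NormedAddCommGroup 𝓐] [NormedSpace ℂ 𝓐]
variable (τ : ℝ → ℂ) (ι : 𝓐 →ₗ[ℂ] (ℝ → ℂ))

/-- bounded functions -/
private lemma boundedAux {g : ℝ → ℂ} (hc : Continuous g)
    (h0 : Tendsto g (cocompact ℝ) (nhds 0)) : ∃ M, ∀ t, ‖g t‖ ≤ M := by
  have h1 : {x | g x ∈ Metric.ball 0 1} ∈ cocompact ℝ := h0 (Metric.ball_mem_nhds 0 one_pos)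
  rw [Filter.mem_cocompact] at h1
  obtain ⟨Kc, hKc, hsub⟩ := h1
  obtain ⟨M, hM⟩ := hKc.exists_bound_of_continuousOn hc.continuousOn
  refine ⟨max M 1, fun t => ?_⟩
  by_cases ht : t ∈ Kc
  · exact le_trans (hM t ht) (le_max_left _ _)
  · have := hsub ht
    simp only [Set.mem_setOf_eq, Metric.mem_ball, dist_zero_right] at this
    exact le_trans this.le (le_max_right _ _)

variable (hτ_bdd : ∃ C, ∀ t, ‖τ t‖ ≤ C)
variable (hrange : ∀ g : ℝ → ℂ, (∃ f : 𝓐, ι f = g) ↔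
      (Continuous g ∧ Tendsto g (cocompact ℝ) (nhds 0) ∧
        Summable (fun k : ℕ => ⨆ t : ℝ, ‖g t * (τ t) ^ k‖)))
variable (hnorm : ∀ f : 𝓐, ‖f‖ = ∑' k : ℕ, ⨆ t : ℝ, ‖ι f t * (τ t) ^ k‖)

include hrange in
private lemma memAux (f : 𝓐) : Continuous (ι f) ∧ Tendsto (ι f) (cocompact ℝ) (nhds 0) ∧
    Summable (fun k : ℕ => ⨆ t : ℝ, ‖ι f t * (τ t) ^ k‖) := (hrange (ι f)).1 ⟨f, rfl⟩

include hτ_bdd hrange in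
private lemma bddAux (f : 𝓐) (k : ℕ) :
    BddAbove (Set.range fun t => ‖ι f t * (τ t) ^ k‖) := by
  obtain ⟨hc, h0, -⟩ := memAux τ ι hrange f
  obtain ⟨M, hM⟩ := boundedAux hc h0
  obtain ⟨C, hC⟩ := hτ_bdd
  refine ⟨M * (max C 0) ^ k, ?_⟩
  rintro - ⟨t, rfl⟩
  show ‖ι f t * τ t ^ k‖ ≤ _
  rw [norm_mul, norm_pow]
  have h1 : ‖τ t‖ ≤ max C 0 := by
    exact (hC t).trans (le_max_left _ _)
  exact mul_le_mul (hM t) (pow_le_pow_left₀ (norm_nonneg _) h1 k)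
    (pow_nonneg (norm_nonneg _) k) ((norm_nonneg _).trans (hM t))

include hτ_bdd hrange hnorm in
private lemma ptleAux (f : 𝓐) (t : ℝ) : ‖ι f t‖ ≤ ‖f‖ := by
  rw [hnorm f]
  have h1 : ‖ι f t‖ = ‖ι f t * (τ t) ^ 0‖ := by simp
  rw [h1]
  refine le_trans (le_ciSup (bddAux τ ι hτ_bdd hrange f 0) t) ?_
  exact Summable.le_tsum (memAux τ ι hrange f).2.2 0
    (fun j _ => Real.iSup_nonneg fun t => norm_nonneg _)

end SegalAux

section PowAux

variable {𝓐 : Type*} [NormedAddCommGroup 𝓐] [NormedSpace ℂ 𝓐]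
variable (τ : ℝ → ℂ) (ι : 𝓐 →ₗ[ℂ] (ℝ → ℂ))
variable (α : ℝ ≃ₜ ℝ) (w : ℝ → ℝ)
variable (T S : 𝓐 →L[ℂ] 𝓐)
variable (hT : ∀ (f : 𝓐) (t : ℝ), ι (T f) t = (w t : ℂ) * ι f (α t))
variable (hST : ∀ f, S (T f) = f) (hTS : ∀ f, T (S f) = f)
variable (hw_pos : ∀ t, 0 < w t)

include hT in
private lemma TpowAux (n : ℕ) (f : 𝓐) (t : ℝ) :
    ι ((T ^ n) f) t = (∏ j ∈ range n, ((w ((⇑α)^[j] t) : ℂ))) * ι f ((⇑α)^[n] t) := by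
  induction n generalizing f with
  | zero => simp
  | succ n ih =>
    rw [pow_succ, ContinuousLinearMap.mul_apply, ih, hT, prod_range_succ,
      Function.iterate_succ_apply' α n t]
    ring

include hT hTS hw_pos in
private lemma SAux (g : 𝓐) (t : ℝ) :
    ι (S g) t = ((w (α.symm t) : ℂ))⁻¹ * ι g (α.symm t) := by
  have h1 := hT (S g) (α.symm t)
  rw [hTS g, α.apply_symm_apply] at h1
  have hne : ((w (α.symm t)) : ℂ) ≠ 0 := Complex.ofReal_ne_zero.2 (hw_pos _).ne'
  rw [h1, ← mul_assoc, inv_mul_cancel₀ hne, one_mul]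

include hT hTS hw_pos in
private lemma SpowAux (n : ℕ) (g : 𝓐) (t : ℝ) :
    ι ((S ^ n) g) t = (∏ j ∈ range n, ((w ((⇑α.symm)^[j + 1] t) : ℂ)))⁻¹ *
      ι g ((⇑α.symm)^[n] t) := by
  induction n generalizing g with
  | zero => simp
  | succ n ih =>
    rw [pow_succ, ContinuousLinearMap.mul_apply, ih, SAux ι α w T S hT hTS hw_pos,
      prod_range_succ, Function.iterate_succ_apply' (⇑α.symm) n t, mul_inv]
    ring

include hTS in
private lemma TSpowAux (n : ℕ) (g : 𝓐) : (T ^ n) ((S ^ n) g) = g := by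
  induction n generalizing g with
  | zero => simp
  | succ n ih =>
    rw [pow_succ' T, pow_succ S, ContinuousLinearMap.mul_apply,
      ContinuousLinearMap.mul_apply, ih (S g), hTS]

end PowAux

section BoundAux

variable {𝓐 : Type*} [NormedAddCommGroup 𝓐] [NormedSpace ℂ 𝓐]
variable (τ : ℝ → ℂ) (ι : 𝓐 →ₗ[ℂ] (ℝ → ℂ))
variable (hτ_bdd : ∃ C, ∀ t, ‖τ t‖ ≤ C)
variable (hrange : ∀ g : ℝ → ℂ, (∃ f : 𝓐, ι f = g) ↔
      (Continuous g ∧ Tendsto g (cocompact ℝ) (nhds 0) ∧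
        Summable (fun k : ℕ => ⨆ t : ℝ, ‖g t * (τ t) ^ k‖)))
variable (hnorm : ∀ f : 𝓐, ‖f‖ = ∑' k : ℕ, ⨆ t : ℝ, ‖ι f t * (τ t) ^ k‖)
variable (α : ℝ ≃ₜ ℝ) (w : ℝ → ℝ)
variable (T S : 𝓐 →L[ℂ] 𝓐)
variable (hτα : ∀ t, τ (α t) = τ t)
variable (hT : ∀ (f : 𝓐) (t : ℝ), ι (T f) t = (w t : ℂ) * ι f (α t))
variable (hST : ∀ f, S (T f) = f) (hTS : ∀ f, T (S f) = f)
variable (hw_pos : ∀ t, 0 < w t)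

include hτ_bdd hrange hnorm hτα hT hw_pos in
private lemma TboundAux (n : ℕ) (f : 𝓐) (K : Set ℝ) (c : ℝ) (hc : 0 ≤ c)
    (hsupp : ∀ t, t ∉ K → ι f t = 0)
    (hP : ∀ t ∈ K, (∏ j ∈ range n, w ((⇑α.symm)^[n - j] t)) ≤ c) :
    ‖(T ^ n) f‖ ≤ c * ‖f‖ := by
  rw [hnorm ((T ^ n) f), hnorm f, ← tsum_mul_left]
  refine Summable.tsum_le_tsum ?_ (memAux τ ι hrange _).2.2 (((memAux τ ι hrange f).2.2).mul_left c)
  intro k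
  refine Real.iSup_le ?_ (mul_nonneg hc (Real.iSup_nonneg fun t => norm_nonneg _))
  intro t
  by_cases hs : (⇑α)^[n] t ∈ K
  · have ht' : t = (⇑α.symm)^[n] ((⇑α)^[n] t) := by
      have := iterCancelAux' α n n le_rfl t
      simp only [Nat.sub_self, Function.iterate_zero, id_eq] at this
      exact this.symm
    have hττ : τ t = τ ((⇑α)^[n] t) := (tauIterAux τ α hτα n t).symm
    rw [TpowAux ι α w T hT n f t, hττ, mul_assoc, norm_mul, ← Complex.ofReal_prod,
      Complex.norm_real, Real.norm_eq_abs,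
      abs_of_nonneg (prod_nonneg (fun j _ => (hw_pos _).le))]
    have hprod : (∏ j ∈ range n, w ((⇑α)^[j] t)) =
        ∏ j ∈ range n, w ((⇑α.symm)^[n - j] ((⇑α)^[n] t)) := by
      refine prod_congr rfl fun j hj => ?_
      rw [mem_range] at hj
      congr 1
      conv_lhs => rw [ht']
      exact iterCancelAux α j n hj.le _
    rw [hprod]
    exact mul_le_mul (hP _ hs) (le_ciSup (bddAux τ ι hτ_bdd hrange f k) ((⇑α)^[n] t))
      (norm_nonneg _) hc
  · rw [TpowAux ι α w T hT n f t, hsupp _ hs, mul_zero, zero_mul, norm_zero]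
    exact mul_nonneg hc (Real.iSup_nonneg fun t => norm_nonneg _)

include hτ_bdd hrange hnorm hτα hT hTS hw_pos in
private lemma SboundAux (n : ℕ) (g : 𝓐) (K : Set ℝ) (c : ℝ) (hc : 0 ≤ c)
    (hsupp : ∀ t, t ∉ K → ι g t = 0)
    (hQ : ∀ t ∈ K, (∏ j ∈ range n, (w ((⇑α)^[j] t))⁻¹) ≤ c) :
    ‖(S ^ n) g‖ ≤ c * ‖g‖ := by
  rw [hnorm ((S ^ n) g), hnorm g, ← tsum_mul_left]
  refine Summable.tsum_le_tsum ?_ (memAux τ ι hrange _).2.2 (((memAux τ ι hrange g).2.2).mul_left c)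
  intro k
  refine Real.iSup_le ?_ (mul_nonneg hc (Real.iSup_nonneg fun t => norm_nonneg _))
  intro t
  by_cases hs : (⇑α.symm)^[n] t ∈ K
  · have ht' : t = (⇑α)^[n] ((⇑α.symm)^[n] t) := by
      have := iterCancelAux α n n le_rfl t
      simp only [Nat.sub_self, Function.iterate_zero, id_eq] at this
      exact this.symm
    have hττ : τ t = τ ((⇑α.symm)^[n] t) := (tauIterSymmAux τ α hτα n t).symm
    rw [SpowAux ι α w T S hT hTS hw_pos n g t, hττ, mul_assoc, norm_mul, ← Complex.ofReal_prod,
      norm_inv, Complex.norm_real, Real.norm_eq_abs,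
      abs_of_nonneg (prod_nonneg (fun j _ => (hw_pos _).le)), ← prod_inv_distrib]
    have hprod : (∏ j ∈ range n, (w ((⇑α.symm)^[j + 1] t))⁻¹) =
        ∏ j ∈ range n, (w ((⇑α)^[j] ((⇑α.symm)^[n] t)))⁻¹ := by
      rw [← prod_range_reflect (fun j => (w ((⇑α)^[j] ((⇑α.symm)^[n] t)))⁻¹) n]
      refine prod_congr rfl fun j hj => ?_
      rw [mem_range] at hj
      congr 2
      conv_lhs => rw [ht']
      rw [iterCancelAux' α (j + 1) n (by omega) _]
      congr 1
      omega
    rw [hprod]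
    exact mul_le_mul (hQ _ hs) (le_ciSup (bddAux τ ι hτ_bdd hrange g k) ((⇑α.symm)^[n] t))
      (norm_nonneg _) hc
  · rw [SpowAux ι α w T S hT hTS hw_pos n g t, hsupp _ hs, mul_zero, zero_mul, norm_zero]
    exact mul_nonneg hc (Real.iSup_nonneg fun t => norm_nonneg _)

end BoundAux


section Dens
variable {𝓐 : Type*} [NormedAddCommGroup 𝓐] [NormedSpace ℂ 𝓐]
variable (τ : ℝ → ℂ) (ι : 𝓐 →ₗ[ℂ] (ℝ → ℂ))
variable (hτ_bdd : ∃ C, ∀ t, ‖τ t‖ ≤ C)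
variable (hrange : ∀ g : ℝ → ℂ, (∃ f : 𝓐, ι f = g) ↔
      (Continuous g ∧ Tendsto g (cocompact ℝ) (nhds 0) ∧
        Summable (fun k : ℕ => ⨆ t : ℝ, ‖g t * (τ t) ^ k‖)))
variable (hnorm : ∀ f : 𝓐, ‖f‖ = ∑' k : ℕ, ⨆ t : ℝ, ‖ι f t * (τ t) ^ k‖)


include hτ_bdd hrange hnorm in
private lemma densityAux (hτ_cont : Continuous τ) (f : 𝓐) (η : ℝ) (hη : 0 < η) :
    ∃ (f₀ : 𝓐) (K : Set ℝ) (ε : ℝ), ‖f₀ - f‖ < η ∧ IsCompact K ∧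
      (∀ t, t ∉ K → ι f₀ t = 0) ∧ 0 < ε ∧ ε < 1 ∧ ∀ t ∈ K, ‖τ t‖ ≤ ε := by
  obtain ⟨hc, htend, ha⟩ := memAux τ ι hrange f
  set a : ℕ → ℝ := fun k => ⨆ t, ‖ι f t * τ t ^ k‖ with ha_def
  have hanon : ∀ k, 0 ≤ a k := fun k => Real.iSup_nonneg fun t => norm_nonneg _
  obtain ⟨C0, hC0⟩ := id hτ_bdd
  set C := max C0 1 with hC_def
  have hC1 : (1:ℝ) ≤ C := le_max_right _ _
  have hCt : ∀ t, ‖τ t‖ ≤ C := fun t => (hC0 t).trans (le_max_left _ _)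
  clear_value C
  -- step 1 : tail of the series
  have htail : Tendsto (fun m => ∑' i, a (i + m)) atTop (nhds 0) := by
    have h1 : ∀ m : ℕ, ∑' i, a (i + m) = (∑' i, a i) - ∑ i ∈ range m, a i := by
      intro m
      have := Summable.sum_add_tsum_nat_add m ha
      linarith
    have h2 : Tendsto (fun m => (∑' i, a i) - ∑ i ∈ range m, a i) atTop
        (nhds ((∑' i, a i) - (∑' i, a i))) :=
      tendsto_const_nhds.sub ha.hasSum.tendsto_sum_nat
    rw [sub_self] at h2
    exact h2.congr fun m => (h1 m).symm
  obtain ⟨m, hm⟩ := (htail.eventually_lt_const (half_pos hη)).exists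
  set s := η / (2 * (m + 1) * C ^ m) with hs_def
  have hCm : (0:ℝ) < C ^ m := by positivity
  have hspos : 0 < s := by
    apply div_pos hη
    positivity
  clear_value s
  -- step 2 : choose p with a p < s / 2
  have hato : Tendsto a atTop (nhds 0) := ha.tendsto_atTop_zero
  obtain ⟨p, hp1, hpa⟩ : ∃ p : ℕ, 1 ≤ p ∧ a p < s / 2 := by
    obtain ⟨p, hp⟩ := ((eventually_ge_atTop 1).and
      (hato.eventually_lt_const (half_pos hspos))).exists
    exact ⟨p, hp.1, hp.2⟩
  set x := max (a p / s) (1/2) with hx_def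
  have hx0 : (0:ℝ) < x := lt_of_lt_of_le (by norm_num) (le_max_right _ _)
  have hx1 : x < 1 := by
    apply max_lt
    · rw [div_lt_one hspos]; linarith
    · norm_num
  set θ := x ^ ((p:ℝ)⁻¹) with hθ_def
  have hθ0 : 0 ≤ θ := Real.rpow_nonneg hx0.le _
  have hθ1 : θ < 1 := Real.rpow_lt_one hx0.le hx1 (by positivity)
  have hθp : θ ^ p = x := by
    rw [hθ_def, ← Real.rpow_natCast (x ^ ((p:ℝ)⁻¹)) p, ← Real.rpow_mul hx0.le,
      inv_mul_cancel₀ (by exact_mod_cast Nat.one_le_iff_ne_zero.1 hp1 : (p:ℝ) ≠ 0),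
      Real.rpow_one]
  have hxhalf : (1/2:ℝ) ≤ x := le_max_right _ _
  clear_value θ
  clear_value x
  have hgsmall : ∀ t, θ < ‖τ t‖ → ‖ι f t‖ ≤ s := by
    intro t ht
    have h2 : x < ‖τ t‖ ^ p := by
      rw [← hθp]
      exact pow_lt_pow_left₀ ht hθ0 (Nat.one_le_iff_ne_zero.1 hp1)
    have h4 : ‖ι f t‖ * ‖τ t‖ ^ p ≤ a p := by
      have he : ‖ι f t * τ t ^ p‖ = ‖ι f t‖ * ‖τ t‖ ^ p := by
        rw [norm_mul, norm_pow]
      rw [← he]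
      exact le_ciSup (bddAux τ ι hτ_bdd hrange f p) t
    have h5 : a p ≤ x * s := by
      have : (1/2 : ℝ) * s ≤ x * s :=
        mul_le_mul_of_nonneg_right hxhalf hspos.le
      linarith
    nlinarith [norm_nonneg (ι f t)]
  set θ₂ := (1 + 2*θ)/3 with hθ₂_def
  set ε := (2 + θ)/3 with hε_def
  have hθθ₂ : θ < θ₂ := by rw [hθ₂_def]; linarith
  have hθ₂ε : θ₂ < ε := by rw [hθ₂_def, hε_def]; linarith
  have hε1 : ε < 1 := by rw [hε_def]; linarith
  have hε0 : 0 < ε := by rw [hε_def]; linarith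
  have hθ₂1 : θ₂ ≤ 1 := by rw [hθ₂_def]; linarith
  clear_value θ₂ ε
  -- step 3 : far away
  have h6 : {t : ℝ | ‖ι f t‖ < s} ∈ cocompact ℝ := by
    have h6' : ∀ᶠ t in cocompact ℝ, dist (ι f t) 0 < s :=
      Metric.tendsto_nhds.mp htend s hspos
    exact (by simpa only [dist_zero_right] using h6' : ∀ᶠ t in cocompact ℝ, ‖ι f t‖ < s)
  obtain ⟨Kc, hKcc, hKcsub⟩ := Filter.mem_cocompact.1 h6
  obtain ⟨R0, hR0⟩ := hKcc.isBounded.subset_closedBall 0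
  set R := max R0 0 with hR_def
  have hR0le : R0 ≤ R := le_max_left _ _
  clear_value R
  have hfar : ∀ t : ℝ, R < |t| → ‖ι f t‖ < s := by
    intro t ht
    refine hKcsub (fun hmem => ?_)
    have h7 := hR0 hmem
    rw [Metric.mem_closedBall, Real.dist_eq, sub_zero] at h7
    linarith
  -- cutoff function
  set A : Set ℝ := Metric.closedBall 0 R ∩ {t | ‖τ t‖ ≤ θ₂} with hA_def
  set U : Set ℝ := Metric.ball 0 (R+1) ∩ {t | ‖τ t‖ < ε} with hU_def
  have hτabs : Continuous fun t => ‖τ t‖ := continuous_norm.comp hτ_cont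
  have hAclosed : IsClosed A :=
    Metric.isClosed_closedBall.inter (isClosed_le hτabs continuous_const)
  have hUopen : IsOpen U := Metric.isOpen_ball.inter (isOpen_lt hτabs continuous_const)
  have hAU : A ⊆ U := by
    rintro t ⟨h1, h2⟩
    constructor
    · rw [Metric.mem_closedBall] at h1
      rw [Metric.mem_ball]
      linarith
    · exact lt_of_le_of_lt h2 hθ₂ε
  obtain ⟨χ, hχ0, hχ1, hχmem⟩ := exists_continuous_zero_one_of_isClosed
    hUopen.isClosed_compl hAclosed
    (by rw [Set.disjoint_left]; exact fun t ht hA => ht (hAU hA))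
  have hχbd : ∀ t, |χ t| ≤ 1 := fun t => abs_le.2 ⟨by linarith [(hχmem t).1], (hχmem t).2⟩
  -- the truncated element
  obtain ⟨f₀, hf₀⟩ : ∃ f₀ : 𝓐, ι f₀ = fun t => (χ t : ℂ) * ι f t := by
    rw [hrange]
    refine ⟨(Complex.continuous_ofReal.comp χ.continuous).mul hc, ?_, ?_⟩
    · apply squeeze_zero_norm (a := fun t => ‖ι f t‖)
      · intro t
        rw [norm_mul, Complex.norm_real, Real.norm_eq_abs]
        calc |χ t| * ‖ι f t‖ ≤ 1 * ‖ι f t‖ :=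
              mul_le_mul_of_nonneg_right (hχbd t) (norm_nonneg _)
        _ = ‖ι f t‖ := one_mul _
      · simpa using htend.norm
    · refine Summable.of_nonneg_of_le (fun k => Real.iSup_nonneg fun t => norm_nonneg _)
        (fun k => ?_) ha
      refine Real.iSup_le (fun t => ?_) (hanon k)
      calc ‖(χ t : ℂ) * ι f t * τ t ^ k‖ = |χ t| * ‖ι f t * τ t ^ k‖ := by
            rw [mul_assoc, norm_mul, Complex.norm_real, Real.norm_eq_abs]
      _ ≤ 1 * ‖ι f t * τ t ^ k‖ := mul_le_mul_of_nonneg_right (hχbd t) (norm_nonneg _)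
      _ ≤ a k := by rw [one_mul]; exact le_ciSup (bddAux τ ι hτ_bdd hrange f k) t
  set K : Set ℝ := Metric.closedBall 0 (R+1) ∩ {t | ‖τ t‖ ≤ ε} with hK_def
  have hKcomp : IsCompact K :=
    (isCompact_closedBall 0 (R+1)).inter_right (isClosed_le hτabs continuous_const)
  have hχoff : ∀ t, t ∉ U → χ t = 0 := fun t ht => hχ0 ht
  have hsupp : ∀ t, t ∉ K → ι f₀ t = 0 := by
    intro t ht
    rw [hf₀]
    have hU : t ∉ U := by
      intro hU
      exact ht ⟨Metric.ball_subset_closedBall hU.1, le_of_lt (show ‖τ t‖ < ε from hU.2)⟩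
    simp only []
    rw [hχoff t hU]
    simp
  have hτK : ∀ t ∈ K, ‖τ t‖ ≤ ε := fun t ht => ht.2
  -- the norm estimate
  have hdiff : ∀ t : ℝ, ι (f₀ - f) t = ((χ t : ℂ) - 1) * ι f t := by
    intro t
    rw [map_sub, Pi.sub_apply, hf₀]
    ring
  set b : ℕ → ℝ := fun k => ⨆ t, ‖ι (f₀ - f) t * τ t ^ k‖ with hb_def
  have hbnon : ∀ k, 0 ≤ b k := fun k => Real.iSup_nonneg fun t => norm_nonneg _
  have hχ1bd : ∀ t, |χ t - 1| ≤ 1 := fun t =>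
    abs_le.2 ⟨by linarith [(hχmem t).1], by linarith [(hχmem t).2]⟩
  have hble : ∀ k, b k ≤ a k := by
    intro k
    refine Real.iSup_le (fun t => ?_) (hanon k)
    rw [hdiff t]
    calc ‖((χ t : ℂ) - 1) * ι f t * τ t ^ k‖ = |χ t - 1| * ‖ι f t * τ t ^ k‖ := by
          rw [mul_assoc, norm_mul, show ((χ t : ℂ) - 1) = ((χ t - 1 : ℝ) : ℂ) by
            push_cast; ring, Complex.norm_real, Real.norm_eq_abs]
    _ ≤ 1 * ‖ι f t * τ t ^ k‖ := mul_le_mul_of_nonneg_right (hχ1bd t) (norm_nonneg _)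
    _ ≤ a k := by rw [one_mul]; exact le_ciSup (bddAux τ ι hτ_bdd hrange f k) t
  have hbsum : Summable b := (memAux τ ι hrange (f₀ - f)).2.2
  have hhead : ∀ i : ℕ, i ≤ m → b i ≤ s * C ^ m := by
    intro i him
    refine Real.iSup_le (fun t => ?_) (by positivity)
    rw [hdiff t]
    by_cases htA : t ∈ A
    · have : χ t = 1 := hχ1 htA
      rw [this]
      simp only [Complex.ofReal_one, sub_self, zero_mul, norm_zero]
      positivity
    · have hval : ‖((χ t : ℂ) - 1) * ι f t * τ t ^ i‖ ≤ ‖ι f t‖ * ‖τ t‖ ^ i := by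
        calc ‖((χ t : ℂ) - 1) * ι f t * τ t ^ i‖
            = |χ t - 1| * (‖ι f t‖ * ‖τ t‖ ^ i) := by
              rw [mul_assoc, norm_mul, norm_mul, norm_pow,
                show ((χ t : ℂ) - 1) = ((χ t - 1 : ℝ) : ℂ) by push_cast; ring,
                Complex.norm_real, Real.norm_eq_abs]
        _ ≤ 1 * (‖ι f t‖ * ‖τ t‖ ^ i) :=
              mul_le_mul_of_nonneg_right (hχ1bd t)
                (mul_nonneg (norm_nonneg _) (by positivity))
        _ = ‖ι f t‖ * ‖τ t‖ ^ i := one_mul _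
      refine hval.trans ?_
      have hcases : R < |t| ∨ θ₂ < ‖τ t‖ := by
        by_contra hcon
        push_neg at hcon
        exact htA ⟨by rw [Metric.mem_closedBall, Real.dist_eq, sub_zero]; exact hcon.1,
          hcon.2⟩
      rcases hcases with hcase | hcase
      · -- far away, |τ| ≤ θ₂ not known! but we also know nothing about |τ|... 
        by_cases hτt : ‖τ t‖ ≤ θ₂
        · have h8 : ‖ι f t‖ ≤ s := (hfar t hcase).le
          have h9 : ‖τ t‖ ^ i ≤ 1 := by
            apply pow_le_one₀ (norm_nonneg _)
            linarith
          calc ‖ι f t‖ * ‖τ t‖ ^ i ≤ s * 1 :=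
                mul_le_mul h8 h9 (by positivity) hspos.le
          _ ≤ s * C ^ m := by
              have : (1:ℝ) ≤ C ^ m := one_le_pow₀ hC1
              nlinarith
        · push_neg at hτt
          have h8 : ‖ι f t‖ ≤ s := hgsmall t (lt_trans hθθ₂ hτt)
          have h9 : ‖τ t‖ ^ i ≤ C ^ m :=
            le_trans (pow_le_pow_left₀ (norm_nonneg _) (hCt t) i)
              (pow_le_pow_right₀ hC1 him)
          exact mul_le_mul h8 h9 (by positivity) hspos.le
      · have h8 : ‖ι f t‖ ≤ s := hgsmall t (lt_trans hθθ₂ hcase)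
        have h9 : ‖τ t‖ ^ i ≤ C ^ m :=
          le_trans (pow_le_pow_left₀ (norm_nonneg _) (hCt t) i)
            (pow_le_pow_right₀ hC1 him)
        exact mul_le_mul h8 h9 (by positivity) hspos.le
  have hsplit := Summable.sum_add_tsum_nat_add m hbsum
  have htailb : ∑' i, b (i + m) ≤ ∑' i, a (i + m) :=
    Summable.tsum_le_tsum (fun i => hble _) ((summable_nat_add_iff m).2 hbsum)
      ((summable_nat_add_iff m).2 ha)
  have hheadsum : ∑ i ∈ range m, b i ≤ η / 2 := by
    have h10 := sum_le_card_nsmul (range m) b (s * C ^ m)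
        (fun i hi => hhead i (by rw [mem_range] at hi; omega))
    rw [card_range, nsmul_eq_mul] at h10
    have hval : ((m:ℝ) + 1) * (s * C ^ m) = η / 2 := by
      rw [hs_def]
      have hCne : (C:ℝ) ^ m ≠ 0 := hCm.ne'
      have hmne : ((m:ℝ) + 1) ≠ 0 := by positivity
      field_simp
    have h11 : (m:ℝ) * (s * C ^ m) ≤ ((m:ℝ) + 1) * (s * C ^ m) :=
      mul_le_mul_of_nonneg_right (by linarith) (mul_nonneg hspos.le hCm.le)
    calc ∑ i ∈ range m, b i ≤ (m:ℝ) * (s * C ^ m) := h10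
    _ ≤ ((m:ℝ) + 1) * (s * C ^ m) := h11
    _ = η / 2 := hval
  have hfinal : ‖f₀ - f‖ < η := by
    calc ‖f₀ - f‖ = ∑' k, b k := hnorm (f₀ - f)
    _ = ∑ i ∈ range m, b i + ∑' i, b (i + m) := hsplit.symm
    _ ≤ η / 2 + ∑' i, a (i + m) := add_le_add hheadsum htailb
    _ < η / 2 + η / 2 := by linarith
    _ = η := by ring
  exact ⟨f₀, K, ε, hfinal, hKcomp, hsupp, hε0, hε1, hτK⟩
end Dens
section Suff
variable {𝓐 : Type*} [NormedAddCommGroup 𝓐] [NormedSpace ℂ 𝓐]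
variable (τ : ℝ → ℂ) (ι : 𝓐 →ₗ[ℂ] (ℝ → ℂ))
variable (hτ_bdd : ∃ C, ∀ t, ‖τ t‖ ≤ C)
variable (hrange : ∀ g : ℝ → ℂ, (∃ f : 𝓐, ι f = g) ↔
      (Continuous g ∧ Tendsto g (cocompact ℝ) (nhds 0) ∧
        Summable (fun k : ℕ => ⨆ t : ℝ, ‖g t * (τ t) ^ k‖)))
variable (hnorm : ∀ f : 𝓐, ‖f‖ = ∑' k : ℕ, ⨆ t : ℝ, ‖ι f t * (τ t) ^ k‖)
variable (α : ℝ ≃ₜ ℝ) (w : ℝ → ℝ)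
variable (T S : 𝓐 →L[ℂ] 𝓐)
variable (hτα : ∀ t, τ (α t) = τ t)
variable (hT : ∀ (f : 𝓐) (t : ℝ), ι (T f) t = (w t : ℂ) * ι f (α t))
variable (hTS : ∀ f, T (S f) = f)
variable (hw_cont : Continuous w) (hw_pos : ∀ t, 0 < w t)

include hτ_bdd hrange hnorm hτα hT hTS hw_cont hw_pos in
private lemma sufficiencyAux (hτ_cont : Continuous τ)
    (hcond : ∀ ε : ℝ, 0 < ε → ε < 1 → ∀ K : Set ℝ, IsCompact K →
        (∀ t ∈ K, ‖τ t‖ ≤ ε) →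
        ∃ n : ℕ → ℕ, StrictMono n ∧ (∀ k, 1 ≤ n k) ∧
          Tendsto (fun k =>
              sSup ((fun t => ((n k : ℝ))⁻¹ *
                ∏ j ∈ range (n k), w ((⇑α.symm)^[n k - j] t)) '' K))
            atTop (nhds 0) ∧
          Tendsto (fun k =>
              sSup ((fun t => (n k : ℝ) *
                ∏ j ∈ range (n k), (w ((⇑α)^[j] t))⁻¹) '' K))
            atTop (nhds 0)) :
    IsCesaroHyperTransitive T := by
  intro O₁ O₂ hO₁ hO₂ hO₁ne hO₂ne
  obtain ⟨f₁, hf₁⟩ := hO₁ne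
  obtain ⟨g₁, hg₁⟩ := hO₂ne
  obtain ⟨r₁, hr₁pos, hr₁⟩ := Metric.isOpen_iff.1 hO₁ f₁ hf₁
  obtain ⟨r₂, hr₂pos, hr₂⟩ := Metric.isOpen_iff.1 hO₂ g₁ hg₁
  set r := min r₁ r₂ with hr_def
  have hrpos : 0 < r := lt_min hr₁pos hr₂pos
  obtain ⟨f₀, Kf, εf, hf₀close, hKf, hKfsupp, hεf0, hεf1, hKfτ⟩ :=
    densityAux τ ι hτ_bdd hrange hnorm hτ_cont f₁ (r/2) (half_pos hrpos)
  obtain ⟨g₀, Kg, εg, hg₀close, hKg, hKgsupp, hεg0, hεg1, hKgτ⟩ :=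
    densityAux τ ι hτ_bdd hrange hnorm hτ_cont g₁ (r/2) (half_pos hrpos)
  set ε := max εf εg with hε_def
  have hε0 : 0 < ε := lt_of_lt_of_le hεf0 (le_max_left _ _)
  have hε1 : ε < 1 := max_lt hεf1 hεg1
  set K : Set ℝ := Kf ∪ Kg with hK_def
  have hKcomp : IsCompact K := hKf.union hKg
  have hτK : ∀ t ∈ K, ‖τ t‖ ≤ ε := by
    rintro t (ht | ht)
    · exact (hKfτ t ht).trans (le_max_left _ _)
    · exact (hKgτ t ht).trans (le_max_right _ _)
  obtain ⟨n, hmono, hpos, ht1, ht2⟩ := hcond ε hε0 hε1 K hKcomp hτK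
  have hc1cont : ∀ ν : ℕ, Continuous (fun t : ℝ => ((ν : ℝ))⁻¹ *
      ∏ j ∈ range ν, w ((⇑α.symm)^[ν - j] t)) := fun ν =>
    continuous_const.mul (continuous_finset_prod _ fun j _ =>
      hw_cont.comp (α.symm.continuous.iterate _))
  have hc2cont : ∀ ν : ℕ, Continuous (fun t : ℝ => (ν : ℝ) *
      ∏ j ∈ range ν, (w ((⇑α)^[j] t))⁻¹) := fun ν =>
    continuous_const.mul (continuous_finset_prod _ fun j _ =>
      (hw_cont.comp (α.continuous.iterate _)).inv₀ (fun t => (hw_pos _).ne'))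
  set c₁ : ℕ → ℝ := fun k => sSup ((fun t => ((n k : ℝ))⁻¹ *
      ∏ j ∈ range (n k), w ((⇑α.symm)^[n k - j] t)) '' K) with hc₁_def
  set c₂ : ℕ → ℝ := fun k => sSup ((fun t => (n k : ℝ) *
      ∏ j ∈ range (n k), (w ((⇑α)^[j] t))⁻¹) '' K) with hc₂_def
  have hc₁mem : ∀ k, ∀ t ∈ K, ((n k : ℝ))⁻¹ *
      ∏ j ∈ range (n k), w ((⇑α.symm)^[n k - j] t) ≤ c₁ k := fun k t ht =>
    le_csSup (hKcomp.bddAbove_image ((hc1cont (n k)).continuousOn)) ⟨t, ht, rfl⟩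
  have hc₂mem : ∀ k, ∀ t ∈ K, (n k : ℝ) *
      ∏ j ∈ range (n k), (w ((⇑α)^[j] t))⁻¹ ≤ c₂ k := fun k t ht =>
    le_csSup (hKcomp.bddAbove_image ((hc2cont (n k)).continuousOn)) ⟨t, ht, rfl⟩
  have hc₁0 : ∀ k, 0 ≤ c₁ k := by
    intro k
    apply Real.sSup_nonneg
    rintro - ⟨t, ht, rfl⟩
    have := prod_nonneg (fun j (_ : j ∈ range (n k)) => (hw_pos ((⇑α.symm)^[n k - j] t)).le)
    positivity
  have hc₂0 : ∀ k, 0 ≤ c₂ k := by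
    intro k
    apply Real.sSup_nonneg
    rintro - ⟨t, ht, rfl⟩
    have := prod_nonneg (fun j (_ : j ∈ range (n k)) =>
      (inv_nonneg.2 (hw_pos ((⇑α)^[j] t)).le))
    positivity
  have hte1 : Tendsto (fun k => c₁ k * ‖f₀‖) atTop (nhds 0) := by
    have := ht1.mul_const ‖f₀‖
    rwa [zero_mul] at this
  have hte2 : Tendsto (fun k => c₂ k * ‖g₀‖) atTop (nhds 0) := by
    have := ht2.mul_const ‖g₀‖
    rwa [zero_mul] at this
  obtain ⟨N₀, hN₀⟩ := Filter.eventually_atTop.1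
    ((hte1.eventually_lt_const (half_pos hrpos)).and
      (hte2.eventually_lt_const (half_pos hrpos)))
  refine ⟨fun k => n (k + N₀), fun a b hab => hmono (by omega), fun k => hpos _, fun k => ?_⟩
  set ν := n (k + N₀) with hν_def
  have hν1 : 1 ≤ ν := hpos _
  have hνR : (0 : ℝ) < (ν : ℝ) := by exact_mod_cast hν1
  have hνC : ((ν : ℂ)) ≠ 0 := Nat.cast_ne_zero.2 (by omega)
  obtain ⟨h₁small, h₂small⟩ := hN₀ (k + N₀) (by omega)
  refine ⟨f₀ + (ν : ℂ) • (S ^ ν) g₀, ?_, ?_⟩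
  · apply hr₁
    rw [Metric.mem_ball, dist_eq_norm]
    have hSb : ‖(S ^ ν) g₀‖ ≤ (c₂ (k + N₀) / ν) * ‖g₀‖ := by
      apply SboundAux τ ι hτ_bdd hrange hnorm α w T S hτα hT hTS hw_pos ν g₀ Kg
        (c₂ (k + N₀) / ν) (div_nonneg (hc₂0 _) hνR.le) hKgsupp
      intro t ht
      rw [le_div_iff₀ hνR]
      have := hc₂mem (k + N₀) t (Set.mem_union_right _ ht)
      linarith [this]
    have hsmul : ‖(ν : ℂ) • (S ^ ν) g₀‖ ≤ c₂ (k + N₀) * ‖g₀‖ := by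
      rw [norm_smul, Complex.norm_natCast]
      calc (ν : ℝ) * ‖(S ^ ν) g₀‖ ≤ (ν : ℝ) * ((c₂ (k + N₀) / ν) * ‖g₀‖) :=
            mul_le_mul_of_nonneg_left hSb hνR.le
      _ = c₂ (k + N₀) * ‖g₀‖ := by field_simp
    calc ‖f₀ + (ν : ℂ) • (S ^ ν) g₀ - f₁‖ = ‖(f₀ - f₁) + (ν : ℂ) • (S ^ ν) g₀‖ := by
          rw [add_sub_right_comm]
    _ ≤ ‖f₀ - f₁‖ + ‖(ν : ℂ) • (S ^ ν) g₀‖ := norm_add_le _ _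
    _ < r/2 + r/2 := add_lt_add hf₀close (hsmul.trans_lt h₂small)
    _ = r := by ring
    _ ≤ r₁ := min_le_left _ _
  · apply hr₂
    rw [Metric.mem_ball, dist_eq_norm]
    have hexp : ((ν : ℂ))⁻¹ • (T ^ ν) (f₀ + (ν : ℂ) • (S ^ ν) g₀) =
        ((ν : ℂ))⁻¹ • (T ^ ν) f₀ + g₀ := by
      rw [map_add, map_smul, TSpowAux T S hTS ν g₀, smul_add, smul_smul,
        inv_mul_cancel₀ hνC, one_smul]
    rw [hexp]
    have hTb : ‖(T ^ ν) f₀‖ ≤ ((ν : ℝ) * c₁ (k + N₀)) * ‖f₀‖ := by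
      apply TboundAux τ ι hτ_bdd hrange hnorm α w T hτα hT hw_pos ν f₀ Kf
        ((ν : ℝ) * c₁ (k + N₀)) (mul_nonneg hνR.le (hc₁0 _)) hKfsupp
      intro t ht
      have h1 := hc₁mem (k + N₀) t (Set.mem_union_left _ ht)
      have h2 : (ν : ℝ) * (((ν : ℝ))⁻¹ * ∏ j ∈ range ν, w ((⇑α.symm)^[ν - j] t)) ≤
          (ν : ℝ) * c₁ (k + N₀) := mul_le_mul_of_nonneg_left h1 hνR.le
      rw [← mul_assoc, mul_inv_cancel₀ hνR.ne', one_mul] at h2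
      exact h2
    have hfsmall : ‖((ν : ℂ))⁻¹ • (T ^ ν) f₀‖ ≤ c₁ (k + N₀) * ‖f₀‖ := by
      rw [norm_smul, norm_inv, Complex.norm_natCast]
      calc ((ν : ℝ))⁻¹ * ‖(T ^ ν) f₀‖ ≤ ((ν : ℝ))⁻¹ * (((ν : ℝ) * c₁ (k + N₀)) * ‖f₀‖) :=
            mul_le_mul_of_nonneg_left hTb (by positivity)
      _ = c₁ (k + N₀) * ‖f₀‖ := by field_simp
    calc ‖((ν : ℂ))⁻¹ • (T ^ ν) f₀ + g₀ - g₁‖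
        = ‖((ν : ℂ))⁻¹ • (T ^ ν) f₀ + (g₀ - g₁)‖ := by rw [add_sub_assoc]
    _ ≤ ‖((ν : ℂ))⁻¹ • (T ^ ν) f₀‖ + ‖g₀ - g₁‖ := norm_add_le _ _
    _ < r/2 + r/2 := add_lt_add (hfsmall.trans_lt h₁small) hg₀close
    _ = r := by ring
    _ ≤ r₂ := min_le_right _ _

end Suff
section Nec
variable {𝓐 : Type*} [NormedAddCommGroup 𝓐] [NormedSpace ℂ 𝓐]
variable (τ : ℝ → ℂ) (ι : 𝓐 →ₗ[ℂ] (ℝ → ℂ))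
variable (hτ_bdd : ∃ C, ∀ t, ‖τ t‖ ≤ C)
variable (hrange : ∀ g : ℝ → ℂ, (∃ f : 𝓐, ι f = g) ↔
      (Continuous g ∧ Tendsto g (cocompact ℝ) (nhds 0) ∧
        Summable (fun k : ℕ => ⨆ t : ℝ, ‖g t * (τ t) ^ k‖)))
variable (hnorm : ∀ f : 𝓐, ‖f‖ = ∑' k : ℕ, ⨆ t : ℝ, ‖ι f t * (τ t) ^ k‖)
variable (α : ℝ ≃ₜ ℝ) (w : ℝ → ℝ)
variable (T S : 𝓐 →L[ℂ] 𝓐)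
variable (hτα : ∀ t, τ (α t) = τ t)
variable (hT : ∀ (f : 𝓐) (t : ℝ), ι (T f) t = (w t : ℂ) * ι f (α t))
variable (hw_pos : ∀ t, 0 < w t)

include hτ_bdd hrange hnorm hτα hT hw_pos in
private lemma necessityAux (hτ_cont : Continuous τ)
    (haper : ∀ K : Set ℝ, IsCompact K →
      ∃ N : ℕ, 0 < N ∧ ∀ n ≥ N, ((⇑α)^[n] '' K) ∩ K = ∅)
    (hcht : IsCesaroHyperTransitive T) :
    ∀ ε : ℝ, 0 < ε → ε < 1 → ∀ K : Set ℝ, IsCompact K →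
        (∀ t ∈ K, ‖τ t‖ ≤ ε) →
        ∃ n : ℕ → ℕ, StrictMono n ∧ (∀ k, 1 ≤ n k) ∧
          Tendsto (fun k =>
              sSup ((fun t => ((n k : ℝ))⁻¹ *
                ∏ j ∈ range (n k), w ((⇑α.symm)^[n k - j] t)) '' K))
            atTop (nhds 0) ∧
          Tendsto (fun k =>
              sSup ((fun t => (n k : ℝ) *
                ∏ j ∈ range (n k), (w ((⇑α)^[j] t))⁻¹) '' K))
            atTop (nhds 0) := by
  intro ε hε0 hε1 K hK hτK
  -- construct the bump function
  obtain ⟨R0, hR0⟩ := hK.isBounded.subset_closedBall 0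
  set R := max R0 0 with hR_def
  set ε' := (1 + ε)/2 with hε'_def
  have hεε' : ε < ε' := by rw [hε'_def]; linarith
  have hε'1 : ε' < 1 := by rw [hε'_def]; linarith
  have hε'0 : 0 < ε' := by rw [hε'_def]; linarith
  have hτabs : Continuous fun t => ‖τ t‖ := continuous_norm.comp hτ_cont
  set U : Set ℝ := Metric.ball 0 (R+1) ∩ {t | ‖τ t‖ < ε'} with hU_def
  have hUopen : IsOpen U := Metric.isOpen_ball.inter (isOpen_lt hτabs continuous_const)
  set Kφ : Set ℝ := Metric.closedBall 0 (R+1) ∩ {t | ‖τ t‖ ≤ ε'} with hKφ_def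
  have hKφcomp : IsCompact Kφ :=
    (isCompact_closedBall 0 (R+1)).inter_right (isClosed_le hτabs continuous_const)
  have hUKφ : U ⊆ Kφ := fun t ht =>
    ⟨Metric.ball_subset_closedBall ht.1, le_of_lt (show ‖τ t‖ < ε' from ht.2)⟩
  have hKU : K ⊆ U := by
    intro t ht
    constructor
    · have h0 := hR0 ht
      rw [Metric.mem_closedBall] at h0
      rw [Metric.mem_ball]
      have hR0R : R0 ≤ R := le_max_left _ _
      linarith
    · exact lt_of_le_of_lt (hτK t ht) hεε'
  have hKKφ : K ⊆ Kφ := fun t ht => hUKφ (hKU ht)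
  obtain ⟨χ, hχ0, hχ1, hχmem⟩ := exists_continuous_zero_one_of_isClosed
    hUopen.isClosed_compl hK.isClosed
    (by rw [Set.disjoint_left]; exact fun t ht hA => ht (hKU hA))
  have hχoff : ∀ t, t ∉ Kφ → χ t = 0 := fun t ht => hχ0 (fun hU => ht (hUKφ hU))
  -- φ as an element of the algebra
  obtain ⟨φA, hφ⟩ : ∃ φA : 𝓐, ι φA = fun t => ((χ t : ℝ) : ℂ) := by
    rw [hrange]
    refine ⟨Complex.continuous_ofReal.comp χ.continuous, ?_, ?_⟩
    · have hKφc : Kφᶜ ∈ cocompact ℝ := Filter.mem_cocompact.2 ⟨Kφ, hKφcomp, subset_rfl⟩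
      have hEE : (fun t => ((χ t : ℝ) : ℂ)) =ᶠ[cocompact ℝ] (fun _ => (0:ℂ)) := by
        filter_upwards [hKφc] with t ht
        rw [hχoff t ht]
        norm_num
      exact Tendsto.congr' hEE.symm tendsto_const_nhds
    · refine Summable.of_nonneg_of_le (fun k => Real.iSup_nonneg fun t => norm_nonneg _)
        (fun k => ?_) (summable_geometric_of_lt_one hε'0.le hε'1)
      refine Real.iSup_le (fun t => ?_) (by positivity)
      by_cases htU : t ∈ U
      · have h1 : ‖τ t‖ < ε' := htU.2
        have h2 : |χ t| ≤ 1 := abs_le.2 ⟨by linarith [(hχmem t).1], (hχmem t).2⟩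
        calc ‖((χ t : ℝ) : ℂ) * τ t ^ k‖ = |χ t| * ‖τ t‖ ^ k := by
              rw [norm_mul, norm_pow, Complex.norm_real, Real.norm_eq_abs]
        _ ≤ 1 * ε' ^ k := by
            apply mul_le_mul h2 (pow_le_pow_left₀ (norm_nonneg _) h1.le k)
              (by positivity) zero_le_one
        _ = ε' ^ k := one_mul _
      · have : χ t = 0 := hχ0 htU
        rw [this]
        simp only [Complex.ofReal_zero, zero_mul, norm_zero]
        positivity
  obtain ⟨N, hNpos, hNdis⟩ := haper Kφ hKφcomp
  -- the key quantitative step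
  have key : ∀ (m L : ℕ), ∃ ν : ℕ, L ≤ ν ∧ 1 ≤ ν ∧
      (∀ t ∈ K, ((ν : ℝ))⁻¹ * ∏ j ∈ range ν, w ((⇑α.symm)^[ν - j] t) ≤ 2/((m:ℝ)+2)) ∧
      (∀ t ∈ K, (ν : ℝ) * ∏ j ∈ range ν, (w ((⇑α)^[j] t))⁻¹ ≤ 2/((m:ℝ)+2)) := by
    intro m L
    set δ : ℝ := 1/((m:ℝ)+2) with hδ_def
    have hδ0 : 0 < δ := by rw [hδ_def]; positivity
    have hδhalf : δ ≤ 1/2 := by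
      rw [hδ_def]
      rw [div_le_div_iff₀ (by positivity) (by norm_num)]
      have : (0:ℝ) ≤ (m:ℝ) := Nat.cast_nonneg m
      linarith
    have h2δ : 2 * δ = 2/((m:ℝ)+2) := by rw [hδ_def]; ring
    obtain ⟨nseq, hmono, hpos1, hwit⟩ := hcht (Metric.ball φA δ) (Metric.ball φA δ)
      Metric.isOpen_ball Metric.isOpen_ball
      ⟨φA, Metric.mem_ball_self hδ0⟩ ⟨φA, Metric.mem_ball_self hδ0⟩
    obtain ⟨f, hfO, hvO⟩ := hwit (max N L)
    set ν := nseq (max N L) with hν_def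
    have hνN : N ≤ ν := le_trans (le_max_left _ _) hmono.le_apply
    have hνL : L ≤ ν := le_trans (le_max_right _ _) hmono.le_apply
    have hν1 : 1 ≤ ν := hpos1 _
    have hνR : (0:ℝ) < (ν:ℝ) := by exact_mod_cast hν1
    set v := ((ν : ℂ))⁻¹ • (T ^ ν) f with hv_def
    -- pointwise estimates
    have hfd : ∀ t, ‖ι f t - ((χ t : ℝ) : ℂ)‖ < δ := by
      intro t
      have h1 : ‖ι (f - φA) t‖ ≤ ‖f - φA‖ := ptleAux τ ι hτ_bdd hrange hnorm (f - φA) t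
      rw [map_sub, Pi.sub_apply, hφ] at h1
      have h2 : ‖f - φA‖ < δ := by
        rw [Metric.mem_ball, dist_eq_norm] at hfO
        exact hfO
      exact lt_of_le_of_lt h1 h2
    have hvd : ∀ t, ‖ι v t - ((χ t : ℝ) : ℂ)‖ < δ := by
      intro t
      have h1 : ‖ι (v - φA) t‖ ≤ ‖v - φA‖ := ptleAux τ ι hτ_bdd hrange hnorm (v - φA) t
      rw [map_sub, Pi.sub_apply, hφ] at h1
      have h2 : ‖v - φA‖ < δ := by
        rw [Metric.mem_ball, dist_eq_norm] at hvO
        exact hvO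
      exact lt_of_le_of_lt h1 h2
    have hdisj : ∀ t ∈ Kφ, (⇑α)^[ν] t ∉ Kφ := by
      intro t ht hc
      have h1 := hNdis ν hνN
      have h2 : (⇑α)^[ν] t ∈ ((⇑α)^[ν] '' Kφ) ∩ Kφ := ⟨⟨t, ht, rfl⟩, hc⟩
      rw [h1] at h2
      exact h2
    have hdisj' : ∀ t ∈ Kφ, (⇑α.symm)^[ν] t ∉ Kφ := by
      intro t ht hc
      have h1 := hNdis ν hνN
      have hαs : (⇑α)^[ν] ((⇑α.symm)^[ν] t) = t := by
        simpa using iterCancelAux α ν ν le_rfl t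
      have h2 : t ∈ ((⇑α)^[ν] '' Kφ) ∩ Kφ := ⟨⟨(⇑α.symm)^[ν] t, hc, hαs⟩, ht⟩
      rw [h1] at h2
      exact h2
    -- the norm of ι f on K is at least 1 - δ
    have hfbig : ∀ t ∈ K, 1 - δ ≤ ‖ι f t‖ := by
      intro t ht
      have h1 := hfd t
      have hχt : χ t = 1 := hχ1 ht
      rw [hχt] at h1
      have h2 : ‖(1 : ℂ)‖ - ‖ι f t‖ ≤ ‖ι f t - ((1:ℝ) : ℂ)‖ := by
        rw [norm_sub_rev]
        exact norm_sub_norm_le _ _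
      rw [norm_one] at h2
      push_cast at h1 h2 ⊢
      linarith
    refine ⟨ν, hνL, hν1, ?_, ?_⟩
    · -- bound on the backward products
      intro t ht
      have hs : (⇑α.symm)^[ν] t ∉ Kφ := hdisj' t (hKKφ ht)
      have hχs : χ ((⇑α.symm)^[ν] t) = 0 := hχoff _ hs
      have hvs : ‖ι v ((⇑α.symm)^[ν] t)‖ < δ := by
        have := hvd ((⇑α.symm)^[ν] t)
        rwa [hχs, Complex.ofReal_zero, sub_zero] at this
      have hαs : (⇑α)^[ν] ((⇑α.symm)^[ν] t) = t := by
        simpa using iterCancelAux α ν ν le_rfl t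
      have hprodpos : 0 < ∏ j ∈ range ν, w ((⇑α)^[j] ((⇑α.symm)^[ν] t)) :=
        prod_pos (fun j _ => hw_pos _)
      have hιv : ι v ((⇑α.symm)^[ν] t) = ((ν : ℂ))⁻¹ *
          ((∏ j ∈ range ν, ((w ((⇑α)^[j] ((⇑α.symm)^[ν] t)) : ℂ))) * ι f t) := by
        rw [hv_def, map_smul, Pi.smul_apply, smul_eq_mul,
          TpowAux ι α w T hT ν f ((⇑α.symm)^[ν] t), hαs]
      have hnv : ‖ι v ((⇑α.symm)^[ν] t)‖ = ((ν : ℝ))⁻¹ *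
          ((∏ j ∈ range ν, w ((⇑α)^[j] ((⇑α.symm)^[ν] t))) * ‖ι f t‖) := by
        rw [hιv, norm_mul, norm_mul, norm_inv, Complex.norm_natCast,
          ← Complex.ofReal_prod, Complex.norm_real, Real.norm_eq_abs,
          abs_of_pos hprodpos]
      have hpi : ∏ j ∈ range ν, w ((⇑α)^[j] ((⇑α.symm)^[ν] t)) =
          ∏ j ∈ range ν, w ((⇑α.symm)^[ν - j] t) := by
        refine prod_congr rfl fun j hj => ?_
        rw [mem_range] at hj
        rw [iterCancelAux α j ν hj.le t]
      rw [hnv, hpi] at hvs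
      have hX0 : 0 ≤ ((ν : ℝ))⁻¹ * ∏ j ∈ range ν, w ((⇑α.symm)^[ν - j] t) := by
        have : 0 < ∏ j ∈ range ν, w ((⇑α.symm)^[ν - j] t) :=
          prod_pos (fun j _ => hw_pos _)
        positivity
      have hfb := hfbig t ht
      rw [← h2δ]
      nlinarith [hvs, hfb, hX0, hδhalf, hδ0]
    · -- bound on the forward products
      intro t ht
      have hαt : (⇑α)^[ν] t ∉ Kφ := hdisj t (hKKφ ht)
      have hχαt : χ ((⇑α)^[ν] t) = 0 := hχoff _ hαt
      have hfs : ‖ι f ((⇑α)^[ν] t)‖ < δ := by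
        have := hfd ((⇑α)^[ν] t)
        rwa [hχαt, Complex.ofReal_zero, sub_zero] at this
      have hvt : 1 - δ ≤ ‖ι v t‖ := by
        have h1 := hvd t
        have hχt : χ t = 1 := hχ1 ht
        rw [hχt] at h1
        have h2 : ‖(1 : ℂ)‖ - ‖ι v t‖ ≤ ‖ι v t - ((1:ℝ) : ℂ)‖ := by
          rw [norm_sub_rev]
          exact norm_sub_norm_le _ _
        rw [norm_one] at h2
        push_cast at h1 h2 ⊢
        linarith
      have hprodpos : 0 < ∏ j ∈ range ν, w ((⇑α)^[j] t) :=
        prod_pos (fun j _ => hw_pos _)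
      have hιv : ι v t = ((ν : ℂ))⁻¹ *
          ((∏ j ∈ range ν, ((w ((⇑α)^[j] t) : ℂ))) * ι f ((⇑α)^[ν] t)) := by
        rw [hv_def, map_smul, Pi.smul_apply, smul_eq_mul, TpowAux ι α w T hT ν f t]
      have hnv : ‖ι v t‖ = ((ν : ℝ))⁻¹ *
          ((∏ j ∈ range ν, w ((⇑α)^[j] t)) * ‖ι f ((⇑α)^[ν] t)‖) := by
        rw [hιv, norm_mul, norm_mul, norm_inv, Complex.norm_natCast,
          ← Complex.ofReal_prod, Complex.norm_real, Real.norm_eq_abs,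
          abs_of_pos hprodpos]
      -- 1 - δ ≤ ν⁻¹ * Y * c with c < δ  ⇒  1/(2δ) ≤ ν⁻¹ * Y
      set Y := ∏ j ∈ range ν, w ((⇑α)^[j] t) with hY_def
      have hY0 : 0 < ((ν : ℝ))⁻¹ * Y := by positivity
      have hstep1 : 1 - δ ≤ ((ν : ℝ))⁻¹ * Y * δ := by
        rw [hnv] at hvt
        nlinarith [hfs, norm_nonneg (ι f ((⇑α)^[ν] t))]
      have hstep2 : 1/(2*δ) ≤ ((ν : ℝ))⁻¹ * Y := by
        rw [div_le_iff₀ (by positivity)]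
        nlinarith
      have hstep3 : (((ν : ℝ))⁻¹ * Y)⁻¹ ≤ (1/(2*δ))⁻¹ := by
        apply inv_anti₀ (by positivity) hstep2
      have hstep4 : (((ν : ℝ))⁻¹ * Y)⁻¹ = (ν : ℝ) * Y⁻¹ := by
        rw [mul_inv, inv_inv]
      rw [hstep4] at hstep3
      have hstep5 : (1/(2*δ))⁻¹ = 2 * δ := by
        rw [one_div, inv_inv]
      rw [hstep5] at hstep3
      rw [prod_inv_distrib, ← hY_def, ← h2δ]
      exact hstep3
  -- build the sequence recursively
  choose F hFL hF1 hFP hFQ using key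
  set ν : ℕ → ℕ := fun m => Nat.rec (F 0 0) (fun m ih => F (m+1) (ih+1)) m with hν_def
  have hνs : ∀ m, ν (m+1) = F (m+1) (ν m + 1) := fun m => rfl
  have hν0 : ν 0 = F 0 0 := rfl
  have hmono : StrictMono ν := by
    apply strictMono_nat_of_lt_succ
    intro m
    have := hFL (m+1) (ν m + 1)
    rw [hνs]
    omega
  have hPb : ∀ m, ∀ t ∈ K, ((ν m : ℝ))⁻¹ *
      ∏ j ∈ range (ν m), w ((⇑α.symm)^[ν m - j] t) ≤ 2/((m:ℝ)+2) := by
    intro m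
    cases m with
    | zero => exact hFP 0 0
    | succ m => exact hFP (m+1) (ν m + 1)
  have hQb : ∀ m, ∀ t ∈ K, (ν m : ℝ) *
      ∏ j ∈ range (ν m), (w ((⇑α)^[j] t))⁻¹ ≤ 2/((m:ℝ)+2) := by
    intro m
    cases m with
    | zero => exact hFQ 0 0
    | succ m => exact hFQ (m+1) (ν m + 1)
  have h1ν : ∀ m, 1 ≤ ν m := by
    intro m
    cases m with
    | zero => exact hF1 0 0
    | succ m => exact hF1 (m+1) (ν m + 1)
  have hlim : Tendsto (fun m : ℕ => 2/((m:ℝ)+2)) atTop (nhds 0) := by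
    have h1 := (tendsto_const_div_atTop_nhds_zero_nat (2:ℝ)).comp (tendsto_add_atTop_nat 2)
    refine h1.congr fun m => ?_
    simp only [Function.comp_apply]
    push_cast
    ring
  refine ⟨ν, hmono, h1ν, ?_, ?_⟩
  · apply tendsto_of_tendsto_of_tendsto_of_le_of_le tendsto_const_nhds hlim
    · intro m
      apply Real.sSup_nonneg
      rintro - ⟨t, ht, rfl⟩
      have : 0 < ∏ j ∈ range (ν m), w ((⇑α.symm)^[ν m - j] t) :=
        prod_pos (fun j _ => hw_pos _)
      positivity
    · intro m
      apply Real.sSup_le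
      · rintro - ⟨t, ht, rfl⟩
        exact hPb m t ht
      · positivity
  · apply tendsto_of_tendsto_of_tendsto_of_le_of_le tendsto_const_nhds hlim
    · intro m
      apply Real.sSup_nonneg
      rintro - ⟨t, ht, rfl⟩
      have : 0 < ∏ j ∈ range (ν m), (w ((⇑α)^[j] t))⁻¹ :=
        prod_pos (fun j _ => inv_pos.2 (hw_pos _))
      positivity
    · intro m
      apply Real.sSup_le
      · rintro - ⟨t, ht, rfl⟩
        exact hQb m t ht
      · positivity

end Nec


/-- Characterization of topologically Cesàro hyper-transitive weighted composition
operators on the Segal algebra `A_τ = { f ∈ C₀(ℝ) : Σ_k ‖f·τ^k‖_∞ < ∞ }` with the norm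
`‖f‖_τ = Σ_k ‖f·τ^k‖_∞`.  The Banach space `𝓐` together with the injective linear map
`ι` realizes `A_τ` as a space of functions on `ℝ`. -/
theorem cesaro_hyper_transitive_iff_weight_condition_segal
    (τ : ℝ → ℂ) (hτ_cont : Continuous τ) (hτ_bdd : ∃ C, ∀ t, ‖τ t‖ ≤ C)
    {𝓐 : Type*} [NormedAddCommGroup 𝓐] [NormedSpace ℂ 𝓐] [CompleteSpace 𝓐]
    (ι : 𝓐 →ₗ[ℂ] (ℝ → ℂ)) (hι_inj : Function.Injective ι)
    (hrange : ∀ g : ℝ → ℂ, (∃ f : 𝓐, ι f = g) ↔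
      (Continuous g ∧ Tendsto g (cocompact ℝ) (nhds 0) ∧
        Summable (fun k : ℕ => ⨆ t : ℝ, ‖g t * (τ t) ^ k‖)))
    (hnorm : ∀ f : 𝓐, ‖f‖ = ∑' k : ℕ, ⨆ t : ℝ, ‖ι f t * (τ t) ^ k‖)
    (α : ℝ ≃ₜ ℝ)
    (haper : ∀ K : Set ℝ, IsCompact K →
      ∃ N : ℕ, 0 < N ∧ ∀ n ≥ N, ((⇑α)^[n] '' K) ∩ K = ∅)
    (hτα : ∀ t, τ (α t) = τ t)
    (w : ℝ → ℝ) (hw_cont : Continuous w) (hw_pos : ∀ t, 0 < w t)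
    (hw_bdd : ∃ C, ∀ t, w t ≤ C) (hw_inv_bdd : ∃ C, ∀ t, (w t)⁻¹ ≤ C)
    (T S : 𝓐 →L[ℂ] 𝓐)
    (hT : ∀ (f : 𝓐) (t : ℝ), ι (T f) t = (w t : ℂ) * ι f (α t))
    (hST : ∀ f, S (T f) = f) (hTS : ∀ f, T (S f) = f) :
    IsCesaroHyperTransitive T ↔
      ∀ ε : ℝ, 0 < ε → ε < 1 → ∀ K : Set ℝ, IsCompact K →
        (∀ t ∈ K, ‖τ t‖ ≤ ε) →
        ∃ n : ℕ → ℕ, StrictMono n ∧ (∀ k, 1 ≤ n k) ∧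
          Tendsto (fun k =>
              sSup ((fun t => ((n k : ℝ))⁻¹ *
                ∏ j ∈ range (n k), w ((⇑α.symm)^[n k - j] t)) '' K))
            atTop (nhds 0) ∧
          Tendsto (fun k =>
              sSup ((fun t => (n k : ℝ) *
                ∏ j ∈ range (n k), (w ((⇑α)^[j] t))⁻¹) '' K))
            atTop (nhds 0) := by
  
  constructor
  · intro hcht
    exact necessityAux τ ι hτ_bdd hrange hnorm α w T hτα hT hw_pos hτ_cont haper hcht
  · intro hcond
    exact sufficiencyAux τ ι hτ_bdd hrange hnorm α w T S hτα hT hTS hw_cont hw_pos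
      hτ_cont hcond
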